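/- In any CL5⁻ proof of a formula F of length k that contains no application of the empty cirquent axiom, no cirquent occurring in the proof contains more than k² arcs (pairs of an ogroup and an oformula it contains). -/

import Mathlib

namespace CirquentCalc

/-- Formulas: literals (negation applied only to atoms), ∧, ∨. -/
inductive Fml where
  | pos : ℕ → Fml
  | neg : ℕ → Fml
  | and : Fml → Fml → Fml
  | or : Fml → Fml → Fml
deriving DecidableEq

namespace Fml

/-- Negation (pushed to atoms, as ¬ applies only to atoms). -/
def negate : Fml → Fml
  | pos n => neg n
  | neg n => pos n
  | and a b => or a.negate b.negate
  | or a b => and a.negate b.negate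

/-- Substitution extended homomorphically. -/
def subst (σ : ℕ → Fml) : Fml → Fml
  | pos n => σ n
  | neg n => (σ n).negate
  | and a b => and (a.subst σ) (b.subst σ)
  | or a b => or (a.subst σ) (b.subst σ)

/-- Classical evaluation under a truth assignment. -/
def eval (v : ℕ → Bool) : Fml → Bool
  | pos n => v n
  | neg n => !(v n)
  | and a b => a.eval v && b.eval v
  | or a b => a.eval v || b.eval v

/-- Number of positive occurrences of atom `a`. -/
def cPos (a : ℕ) : Fml → ℕ
  | pos n => if n = a then 1 else 0
  | neg _ => 0
  | and f g => f.cPos a + g.cPos a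
  | or f g => f.cPos a + g.cPos a

/-- Number of negative occurrences of atom `a`. -/
def cNeg (a : ℕ) : Fml → ℕ
  | pos _ => 0
  | neg n => if n = a then 1 else 0
  | and f g => f.cNeg a + g.cNeg a
  | or f g => f.cNeg a + g.cNeg a

/-- Total number of positive occurrences of atoms. -/
def posOcc : Fml → ℕ
  | pos _ => 1
  | neg _ => 0
  | and f g => f.posOcc + g.posOcc
  | or f g => f.posOcc + g.posOcc

/-- Length: total number of occurrences of literals and connectives. -/
def len : Fml → ℕ
  | pos _ => 1
  | neg _ => 1
  | and f g => f.len + g.len + 1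
  | or f g => f.len + g.len + 1

/-- Number of occurrences of ∧. -/
def nAnd : Fml → ℕ
  | pos _ => 0
  | neg _ => 0
  | and f g => f.nAnd + g.nAnd + 1
  | or f g => f.nAnd + g.nAnd

/-- Number of occurrences of ∨. -/
def nOr : Fml → ℕ
  | pos _ => 0
  | neg _ => 0
  | and f g => f.nOr + g.nOr
  | or f g => f.nOr + g.nOr + 1

end Fml

def Tautology (A : Fml) : Prop := ∀ v, A.eval v = true

/-- No atom has more than two occurrences. -/
def Binary (A : Fml) : Prop := ∀ a, A.cPos a + A.cNeg a ≤ 2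

/-- Whenever an atom occurs twice, one occurrence is positive and one negative. -/
def Normal (A : Fml) : Prop := ∀ a, A.cPos a ≤ 1 ∧ A.cNeg a ≤ 1

def AtomicLevel (σ : ℕ → Fml) : Prop := ∀ n, ∃ m, σ n = Fml.pos m

/-- `F` is an instance of `B`: σ(B) = F for some substitution σ. -/
def InstanceOf (F B : Fml) : Prop := ∃ σ, B.subst σ = F

/-- `F` is an atomic-level instance of `B`. -/
def AtomicInstanceOf (F B : Fml) : Prop := ∃ σ, AtomicLevel σ ∧ B.subst σ = F

/-- A cirquent: a pool of (occurrences of) formulas, and a list of ogroups,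
each an (index-)set of oformulas of the pool. -/
structure Cirquent where
  pool : List Fml
  groups : List (Finset ℕ)

def emptyCirquent : Cirquent := ⟨[], []⟩

def idCirquent (F : Fml) : Cirquent := ⟨[F.negate, F], [{0, 1}]⟩

/-- The cirquent with pool ⟨F⟩ and one ogroup containing F. -/
def fmlCirquent (F : Fml) : Cirquent := ⟨[F], [{0}]⟩

/-- Index renaming swapping `i` and `i+1`. -/
def swapIdx (i : ℕ) : ℕ → ℕ := fun j => if j = i then i + 1 else if j = i + 1 then i else j

/-- Index renaming when a new oformula is inserted at position `i`. -/
def insShift (i : ℕ) : ℕ → ℕ := fun j => if j < i then j else j + 1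

/-- Index renaming when the oformulas at positions `i`, `i+1` are merged into one at `i`. -/
def mergeIdx (i : ℕ) : ℕ → ℕ := fun j => if j ≤ i then j else j - 1

/-- Mix: placing the two premise cirquents side by side. -/
def MixStep (A B C : Cirquent) : Prop :=
  C.pool = A.pool ++ B.pool ∧
  C.groups = A.groups ++ B.groups.map (Finset.image (· + A.pool.length))

/-- Oformula exchange: swap two adjacent oformulas, preserving containment. -/
def OfExchStep (P C : Cirquent) : Prop :=
  ∃ (l₁ l₂ : List Fml) (F G : Fml),
    P.pool = l₁ ++ F :: G :: l₂ ∧ C.pool = l₁ ++ G :: F :: l₂ ∧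
    C.groups = P.groups.map (Finset.image (swapIdx l₁.length))

/-- Ogroup exchange: swap two adjacent ogroups. -/
def OgExchStep (P C : Cirquent) : Prop :=
  C.pool = P.pool ∧
  ∃ (g₁ g₂ : List (Finset ℕ)) (Γ Δ : Finset ℕ),
    P.groups = g₁ ++ Γ :: Δ :: g₂ ∧ C.groups = g₁ ++ Δ :: Γ :: g₂

/-- Pool weakening: insert a new oformula, contained in no ogroup. -/
def PoolWeakStep (P C : Cirquent) : Prop :=
  ∃ (l₁ l₂ : List Fml) (F : Fml),
    P.pool = l₁ ++ l₂ ∧ C.pool = l₁ ++ F :: l₂ ∧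
    C.groups = P.groups.map (Finset.image (insShift l₁.length))

/-- Ogroup weakening: add a new arc between a pre-existing ogroup and oformula. -/
def OgWeakStep (P C : Cirquent) : Prop :=
  C.pool = P.pool ∧
  ∃ (g₁ g₂ : List (Finset ℕ)) (Γ : Finset ℕ) (j : ℕ),
    j < P.pool.length ∧ j ∉ Γ ∧
    P.groups = g₁ ++ Γ :: g₂ ∧ C.groups = g₁ ++ insert j Γ :: g₂

/-- Downward duplication: replace an ogroup by two adjacent copies of it. -/
def DupDownStep (P C : Cirquent) : Prop :=
  C.pool = P.pool ∧
  ∃ (g₁ g₂ : List (Finset ℕ)) (Γ : Finset ℕ),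
    P.groups = g₁ ++ Γ :: g₂ ∧ C.groups = g₁ ++ Γ :: Γ :: g₂

/-- Upward duplication: the converse of downward duplication. -/
def DupUpStep (P C : Cirquent) : Prop :=
  C.pool = P.pool ∧
  ∃ (g₁ g₂ : List (Finset ℕ)) (Γ : Finset ℕ),
    P.groups = g₁ ++ Γ :: Γ :: g₂ ∧ C.groups = g₁ ++ Γ :: g₂

/-- ∨-introduction: merge two adjacent oformulas F, G into F ∨ G. -/
def OrIntroStep (P C : Cirquent) : Prop :=
  ∃ (l₁ l₂ : List Fml) (F G : Fml),
    P.pool = l₁ ++ F :: G :: l₂ ∧ C.pool = l₁ ++ (Fml.or F G) :: l₂ ∧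
    C.groups = P.groups.map (Finset.image (mergeIdx l₁.length))

/-- The merging of the ogroup list in ∧-introduction: no ogroup contains both `i`
and `i+1`; every ogroup containing `i` is immediately followed by one containing
`i+1` and vice versa; such pairs are merged. -/
inductive AndMerge (i : ℕ) : List (Finset ℕ) → List (Finset ℕ) → Prop where
  | nil : AndMerge i [] []
  | skip {Γ : Finset ℕ} {l l' : List (Finset ℕ)} :
      i ∉ Γ → (i + 1) ∉ Γ → AndMerge i l l' → AndMerge i (Γ :: l) (Γ :: l')
  | merge {Γ Δ : Finset ℕ} {l l' : List (Finset ℕ)} :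
      i ∈ Γ → (i + 1) ∉ Γ → (i + 1) ∈ Δ → i ∉ Δ →
      AndMerge i l l' → AndMerge i (Γ :: Δ :: l) ((Γ ∪ Δ) :: l')

/-- ∧-introduction. -/
def AndIntroStep (P C : Cirquent) : Prop :=
  ∃ (l₁ l₂ : List Fml) (F G : Fml) (merged : List (Finset ℕ)),
    P.pool = l₁ ++ F :: G :: l₂ ∧ C.pool = l₁ ++ (Fml.and F G) :: l₂ ∧
    AndMerge l₁.length P.groups merged ∧
    C.groups = merged.map (Finset.image (mergeIdx l₁.length))

inductive RuleName where
  | emptyAx | idAx | mix | ofExch | ogExch | poolWeak | ogWeak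
  | dupDown | dupUp | orIntro | andIntro
deriving DecidableEq

/-- The unary (one-premise) rules, by name. -/
def unRel : RuleName → Cirquent → Cirquent → Prop
  | .ofExch => OfExchStep
  | .ogExch => OgExchStep
  | .poolWeak => PoolWeakStep
  | .ogWeak => OgWeakStep
  | .dupDown => DupDownStep
  | .dupUp => DupUpStep
  | .orIntro => OrIntroStep
  | .andIntro => AndIntroStep
  | _ => fun _ _ => False

/-- Proof trees: each node is labeled by its cirquent and the rule used. -/
inductive PTree where
  | leaf (C : Cirquent) (r : RuleName)
  | un (C : Cirquent) (r : RuleName) (p : PTree)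
  | bin (C : Cirquent) (r : RuleName) (p q : PTree)

namespace PTree

def concl : PTree → Cirquent
  | leaf C _ => C
  | un C _ _ => C
  | bin C _ _ _ => C

/-- Validity: each node follows from its children by the named rule. -/
def Valid : PTree → Prop
  | leaf C r =>
      (r = .emptyAx ∧ C = emptyCirquent) ∨ (r = .idAx ∧ ∃ F, C = idCirquent F)
  | un C r p => p.Valid ∧ unRel r p.concl C
  | bin C r p q => p.Valid ∧ q.Valid ∧ r = .mix ∧ MixStep p.concl q.concl C

/-- Number of applications of rule `r` in the proof. -/
def count (r : RuleName) : PTree → ℕ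
  | leaf _ r' => if r' = r then 1 else 0
  | un _ r' p => (if r' = r then 1 else 0) + p.count r
  | bin _ r' p q => (if r' = r then 1 else 0) + p.count r + q.count r

/-- The cirquents occurring in the proof. -/
def cirquents : PTree → List Cirquent
  | leaf C _ => [C]
  | un C _ p => C :: p.cirquents
  | bin C _ p q => C :: (p.cirquents ++ q.cirquents)

/-- Total number of rule applications (nodes). -/
def nodes : PTree → ℕ
  | leaf _ _ => 1
  | un _ _ p => p.nodes + 1
  | bin _ _ p q => p.nodes + q.nodes + 1

/-- Number of leaves of the proof tree. -/
def leavesCount : PTree → ℕ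
  | leaf _ _ => 1
  | un _ _ p => p.leavesCount
  | bin _ _ p q => p.leavesCount + q.leavesCount

end PTree

/-- A proof uses no duplication. -/
def DupFree (p : PTree) : Prop :=
  p.count RuleName.dupDown = 0 ∧ p.count RuleName.dupUp = 0

/-- Provability of a cirquent in CL5. -/
def ProvesC (C : Cirquent) : Prop := ∃ p : PTree, p.Valid ∧ p.concl = C

/-- Provability of a formula in CL5. -/
def ProvesCL5 (F : Fml) : Prop := ∃ p : PTree, p.Valid ∧ p.concl = fmlCirquent F

/-- Provability of a formula in CL5⁻ (CL5 without duplication). -/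
def ProvesCL5m (F : Fml) : Prop :=
  ∃ p : PTree, p.Valid ∧ DupFree p ∧ p.concl = fmlCirquent F

/-- Number of arcs of a cirquent (sum of the sizes of its ogroups). -/
def Cirquent.arcs (C : Cirquent) : ℕ := (C.groups.map Finset.card).sum

/-- Size of a cirquent: sum of the lengths of the oformulas in its pool plus
the sum of the sizes of its ogroups. -/
def Cirquent.size (C : Cirquent) : ℕ := (C.pool.map Fml.len).sum + C.arcs

/-- Size of a proof: the sum of the sizes of the cirquents it contains. -/
def PTree.size (p : PTree) : ℕ := (p.cirquents.map Cirquent.size).sum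

/-- Total number of positive occurrences of atoms in the pool. -/
def Cirquent.poolPosOcc (C : Cirquent) : ℕ := (C.pool.map Fml.posOcc).sum

end CirquentCalc

open CirquentCalc

namespace CirquentCalc

def Cirquent.mu (C : Cirquent) : ℕ := (C.pool.map Fml.len).sum

def WF (C : Cirquent) : Prop := ∀ Γ ∈ C.groups, ∀ j ∈ Γ, j < C.pool.length

lemma Fml.one_le_len (F : Fml) : 1 ≤ F.len := by
  induction F <;> simp [Fml.len] <;> omega

lemma len_le_sum (l : List Fml) : l.length ≤ (l.map Fml.len).sum := by
  induction l with
  | nil => simp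
  | cons a l ih => simp only [List.length_cons, List.map_cons, List.sum_cons]
                   have := a.one_le_len; omega

lemma pool_len_le_mu (C : Cirquent) : C.pool.length ≤ C.mu := len_le_sum _

lemma AndMerge.length_le {i : ℕ} {l l' : List (Finset ℕ)} (h : AndMerge i l l') :
    l'.length ≤ l.length := by
  induction h <;> simp_all <;> omega

lemma AndMerge.bound {i n : ℕ} {l l' : List (Finset ℕ)} (h : AndMerge i l l')
    (hl : ∀ Γ ∈ l, ∀ j ∈ Γ, j < n) : ∀ Γ ∈ l', ∀ j ∈ Γ, j < n := by
  induction h with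
  | nil => simp
  | @skip Γ l l' h1 h2 h3 ih =>
      intro Δ hΔ
      rcases List.mem_cons.1 hΔ with rfl | hΔ
      · exact hl Δ List.mem_cons_self
      · exact ih (fun Γ' hΓ' => hl Γ' (List.mem_cons_of_mem _ hΓ')) Δ hΔ
  | @merge Γ Θ l l' h1 h2 h3 h4 h5 ih =>
      intro Δ hΔ
      rcases List.mem_cons.1 hΔ with rfl | hΔ
      · intro j hj
        rcases Finset.mem_union.1 hj with hj | hj
        · exact hl Γ List.mem_cons_self j hj
        · exact hl Θ (by simp) j hj
      · refine ih (fun Γ' hΓ' => hl Γ' (by simp [hΓ'])) Δ hΔ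

lemma unStep {r : RuleName} (hr : r ≠ .dupDown) {P C : Cirquent}
    (h : unRel r P C) :
    C.groups.length ≤ P.groups.length ∧ P.mu ≤ C.mu ∧ (WF P → WF C) := by
  cases r with
  | dupDown => exact absurd rfl hr
  | ofExch =>
      obtain ⟨l₁, l₂, F, G, hP, hC, hG⟩ := h
      refine ⟨by simp [hG], ?_, ?_⟩
      · simp [Cirquent.mu, hP, hC]; omega
      · intro hwf Γ hΓ j hj
        rw [hG] at hΓ
        obtain ⟨Δ, hΔ, rfl⟩ := List.mem_map.1 hΓ
        obtain ⟨j', hj', rfl⟩ := Finset.mem_image.1 hj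
        have h1 := hwf Δ hΔ j' hj'
        rw [hP] at h1
        rw [hC]
        simp only [List.length_append, List.length_cons] at h1 ⊢
        unfold swapIdx
        split <;> (try split) <;> omega
  | ogExch =>
      obtain ⟨hpool, g₁, g₂, Γ, Δ, hP, hC⟩ := h
      refine ⟨by simp [hP, hC], le_of_eq (by simp [Cirquent.mu, hpool]), ?_⟩
      intro hwf Γ' hΓ' j hj
      rw [hpool]
      refine hwf Γ' ?_ j hj
      rw [hP]; rw [hC] at hΓ'
      simp only [List.mem_append, List.mem_cons] at hΓ' ⊢
      tauto
  | poolWeak =>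
      obtain ⟨l₁, l₂, F, hP, hC, hG⟩ := h
      refine ⟨by simp [hG], ?_, ?_⟩
      · simp [Cirquent.mu, hP, hC]
      · intro hwf Γ hΓ j hj
        rw [hG] at hΓ
        obtain ⟨Δ, hΔ, rfl⟩ := List.mem_map.1 hΓ
        obtain ⟨j', hj', rfl⟩ := Finset.mem_image.1 hj
        have h1 := hwf Δ hΔ j' hj'
        rw [hP] at h1; rw [hC]
        simp only [List.length_append, List.length_cons] at h1 ⊢
        unfold insShift
        split <;> omega
  | ogWeak =>
      obtain ⟨hpool, g₁, g₂, Γ, j, hjlen, hjΓ, hP, hC⟩ := h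
      refine ⟨by simp [hP, hC], le_of_eq (by simp [Cirquent.mu, hpool]), ?_⟩
      intro hwf Γ' hΓ' j' hj'
      rw [hpool]
      rw [hC] at hΓ'
      simp only [List.mem_append, List.mem_cons] at hΓ'
      rcases hΓ' with h1 | h1 | h1
      · exact hwf Γ' (by rw [hP]; simp [h1]) j' hj'
      · subst h1
        rcases Finset.mem_insert.1 hj' with rfl | hmem
        · exact hjlen
        · exact hwf Γ (by rw [hP]; simp) j' hmem
      · exact hwf Γ' (by rw [hP]; simp [h1]) j' hj'
  | dupUp =>
      obtain ⟨hpool, g₁, g₂, Γ, hP, hC⟩ := h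
      refine ⟨by simp [hP, hC], le_of_eq (by simp [Cirquent.mu, hpool]), ?_⟩
      intro hwf Γ' hΓ' j hj
      rw [hpool]
      refine hwf Γ' ?_ j hj
      rw [hP]; rw [hC] at hΓ'
      simp only [List.mem_append, List.mem_cons] at hΓ' ⊢
      tauto
  | orIntro =>
      obtain ⟨l₁, l₂, F, G, hP, hC, hG⟩ := h
      refine ⟨by simp [hG], ?_, ?_⟩
      · simp [Cirquent.mu, hP, hC, Fml.len]; omega
      · intro hwf Γ hΓ j hj
        rw [hG] at hΓ
        obtain ⟨Δ, hΔ, rfl⟩ := List.mem_map.1 hΓ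
        obtain ⟨j', hj', rfl⟩ := Finset.mem_image.1 hj
        have h1 := hwf Δ hΔ j' hj'
        rw [hP] at h1; rw [hC]
        simp only [List.length_append, List.length_cons] at h1 ⊢
        unfold mergeIdx
        split <;> omega
  | andIntro =>
      obtain ⟨l₁, l₂, F, G, merged, hP, hC, hM, hG⟩ := h
      refine ⟨?_, ?_, ?_⟩
      · rw [hG]; simpa using hM.length_le
      · simp [Cirquent.mu, hP, hC, Fml.len]; omega
      · intro hwf Γ hΓ j hj
        rw [hG] at hΓ
        obtain ⟨Δ, hΔ, rfl⟩ := List.mem_map.1 hΓ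
        obtain ⟨j', hj', rfl⟩ := Finset.mem_image.1 hj
        have h1 : j' < P.pool.length :=
          hM.bound (fun Γ hΓ => hwf Γ hΓ) Δ hΔ j' hj'
        rw [hP] at h1; rw [hC]
        simp only [List.length_append, List.length_cons] at h1 ⊢
        unfold mergeIdx
        split <;> omega
  | emptyAx => exact absurd h not_false
  | idAx => exact absurd h not_false
  | mix => exact absurd h not_false

lemma concl_mem_cirquents (p : PTree) : p.concl ∈ p.cirquents := by
  cases p <;> simp [PTree.concl, PTree.cirquents]

lemma main_inv (p : PTree) (hv : p.Valid) (hd : p.count RuleName.dupDown = 0) :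
    ∀ C ∈ p.cirquents, C.groups.length ≤ C.mu ∧ C.mu ≤ p.concl.mu ∧ WF C := by
  induction p with
  | leaf C r =>
      intro C' hC'
      simp only [PTree.cirquents, List.mem_singleton] at hC'
      subst hC'
      rcases hv with ⟨_, rfl⟩ | ⟨_, F, rfl⟩
      · refine ⟨by simp [emptyCirquent, Cirquent.mu], le_refl _, ?_⟩
        intro Γ hΓ; simp [emptyCirquent] at hΓ
      · refine ⟨?_, le_refl _, ?_⟩
        · have h1 := F.negate.one_le_len
          simp [idCirquent, Cirquent.mu]; omega
        · intro Γ hΓ j hj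
          simp only [idCirquent, List.mem_singleton] at hΓ
          subst hΓ
          simp only [Finset.mem_insert, Finset.mem_singleton] at hj
          simp only [idCirquent, List.length_cons, List.length_nil]
          omega
  | un C r q ih =>
      obtain ⟨hq, hrel⟩ := hv
      simp only [PTree.count] at hd
      have hr : r ≠ .dupDown := by
        intro h; subst h; simp at hd
      have hdq : q.count RuleName.dupDown = 0 := by omega
      have hih := ih hq hdq
      obtain ⟨h1, h2, h3⟩ := hih q.concl (concl_mem_cirquents q)
      obtain ⟨s1, s2, s3⟩ := unStep hr hrel
      intro C' hC'
      simp only [PTree.cirquents, List.mem_cons] at hC'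
      rcases hC' with rfl | hC'
      · exact ⟨le_trans (le_trans s1 h1) s2, le_refl _, s3 h3⟩
      · obtain ⟨t1, t2, t3⟩ := hih C' hC'
        exact ⟨t1, le_trans t2 s2, t3⟩
  | bin C r q₁ q₂ ih₁ ih₂ =>
      simp only [PTree.concl]
      obtain ⟨hq₁, hq₂, hrm, hmix⟩ := hv
      simp only [PTree.count] at hd
      have hd₁ : q₁.count RuleName.dupDown = 0 := by omega
      have hd₂ : q₂.count RuleName.dupDown = 0 := by omega
      have hih₁ := ih₁ hq₁ hd₁
      have hih₂ := ih₂ hq₂ hd₂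
      obtain ⟨a1, a2, a3⟩ := hih₁ q₁.concl (concl_mem_cirquents q₁)
      obtain ⟨b1, b2, b3⟩ := hih₂ q₂.concl (concl_mem_cirquents q₂)
      obtain ⟨hpool, hgr⟩ := hmix
      have hmu : C.mu = q₁.concl.mu + q₂.concl.mu := by
        simp [Cirquent.mu, hpool]
      have hglen : C.groups.length = q₁.concl.groups.length + q₂.concl.groups.length := by
        simp [hgr]
      intro C' hC'
      simp only [PTree.cirquents, List.mem_cons, List.mem_append] at hC'
      rcases hC' with rfl | hC' | hC'
      · refine ⟨by omega, le_refl _, ?_⟩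
        intro Γ hΓ j hj
        rw [hgr] at hΓ
        rw [hpool]
        simp only [List.mem_append] at hΓ
        rcases hΓ with hΓ | hΓ
        · have := a3 Γ hΓ j hj
          simp only [List.length_append]; omega
        · obtain ⟨Δ, hΔ, rfl⟩ := List.mem_map.1 hΓ
          obtain ⟨j', hj', rfl⟩ := Finset.mem_image.1 hj
          have := b3 Δ hΔ j' hj'
          simp only [List.length_append]; omega
      · obtain ⟨t1, t2, t3⟩ := hih₁ C' hC'
        exact ⟨t1, by omega, t3⟩
      · obtain ⟨t1, t2, t3⟩ := hih₂ C' hC'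
        exact ⟨t1, by omega, t3⟩

end CirquentCalc


/-- In any CL5⁻ proof of a formula F of length k with no empty
cirquent axiom, no cirquent in the proof has more than k² arcs. -/
theorem cl5m_arc_bound (F : Fml) (k : ℕ) (hk : k = F.len) (p : PTree)
    (hv : p.Valid) (hd : DupFree p) (hc : p.concl = fmlCirquent F)
    (he : p.count RuleName.emptyAx = 0) :
    ∀ C ∈ p.cirquents, C.arcs ≤ k ^ 2 := by
  intro C hC
  obtain ⟨h1, h2, h3⟩ := main_inv p hv hd.1 C hC
  have hmu : p.concl.mu = k := by
    rw [hc, hk]; simp [fmlCirquent, Cirquent.mu]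
  have hcard : ∀ Γ ∈ C.groups, Γ.card ≤ C.pool.length := by
    intro Γ hΓ
    calc Γ.card ≤ (Finset.range C.pool.length).card :=
          Finset.card_le_card (fun j hj => Finset.mem_range.2 (h3 Γ hΓ j hj))
      _ = C.pool.length := Finset.card_range _
  have harcs : C.arcs ≤ C.groups.length * C.pool.length := by
    have := List.sum_le_card_nsmul (C.groups.map Finset.card) C.pool.length
      (by intro x hx
          obtain ⟨Γ, hΓ, rfl⟩ := List.mem_map.1 hx
          exact hcard Γ hΓ)
    simpa [Cirquent.arcs, smul_eq_mul] using this
  have hpl : C.pool.length ≤ k := le_trans (pool_len_le_mu C) (by omega)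
  have hg : C.groups.length ≤ k := by omega
  calc C.arcs ≤ C.groups.length * C.pool.length := harcs
    _ ≤ k * k := Nat.mul_le_mul hg hpl
    _ = k ^ 2 := (sq k).symm
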